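/- Characterization of maximum-likelihood estimation in transductive Boltzmann machines: a parameter θ* : B → ℝ maximizes the log-likelihood L_D(θ) = Σ_{x ∈ D} (Σ_{s ∈ B} ζ(s,x) θ(s) − ψ(θ)) over all θ : B → ℝ if and only if η(y;θ*) = η̂(y) for every y ∈ B, where η(y;θ) = Σ_{x ∈ S} ζ(y,x) p(x;θ) and η̂(y) = (1/N) Σ_{x ∈ D} ζ(y,x). -/

import Mathlib

open Finset

/-- ζ(s,x) = 1 if s ⊆ x and 0 otherwise. -/
noncomputable def zeta {V : Type*} [DecidableEq V] (s x : Finset V) : ℝ :=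
  if s ⊆ x then 1 else 0

/-- The log-partition function ψ(θ) = log Σ_{x ∈ S} exp(Σ_{s ∈ B} ζ(s,x) θ(s)). -/
noncomputable def psi {V : Type*} [DecidableEq V] (S B : Finset (Finset V))
    (θ : Finset V → ℝ) : ℝ :=
  Real.log (∑ x ∈ S, Real.exp (∑ s ∈ B, zeta s x * θ s))

/-- The Gibbs probability p(x;θ) = exp(Σ_{s ∈ B} ζ(s,x) θ(s) − ψ(θ)). -/
noncomputable def gibbs {V : Type*} [DecidableEq V] (S B : Finset (Finset V))
    (θ : Finset V → ℝ) (x : Finset V) : ℝ :=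
  Real.exp (∑ s ∈ B, zeta s x * θ s - psi S B θ)

/-- The expectation parameter η(y;θ) = Σ_{x ∈ S} ζ(y,x) p(x;θ). -/
noncomputable def eta {V : Type*} [DecidableEq V] (S B : Finset (Finset V))
    (θ : Finset V → ℝ) (y : Finset V) : ℝ :=
  ∑ x ∈ S, zeta y x * gibbs S B θ x

section Aux

variable {V : Type*} [DecidableEq V]

lemma sumexp_pos (S B : Finset (Finset V)) (hS : S.Nonempty) (θ : Finset V → ℝ) :
    0 < ∑ x ∈ S, Real.exp (∑ s ∈ B, zeta s x * θ s) :=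
  Finset.sum_pos (fun _ _ => Real.exp_pos _) hS

lemma gibbs_eq (S B : Finset (Finset V)) (hS : S.Nonempty) (θ : Finset V → ℝ) (x : Finset V) :
    gibbs S B θ x = Real.exp (∑ s ∈ B, zeta s x * θ s) /
      (∑ z ∈ S, Real.exp (∑ s ∈ B, zeta s z * θ s)) := by
  rw [gibbs, Real.exp_sub, psi, Real.exp_log (sumexp_pos S B hS θ)]

lemma gibbs_nonneg (S B : Finset (Finset V)) (θ : Finset V → ℝ) (x : Finset V) :
    0 ≤ gibbs S B θ x := (Real.exp_pos _).le

lemma gibbs_sum_one (S B : Finset (Finset V)) (hS : S.Nonempty) (θ : Finset V → ℝ) :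
    ∑ x ∈ S, gibbs S B θ x = 1 := by
  have h := (sumexp_pos S B hS θ).ne'
  simp only [gibbs_eq S B hS θ]
  rw [← Finset.sum_div, div_self h]

lemma jensen {ι : Type*} (S : Finset ι) (w c : ι → ℝ) (hw : ∀ x ∈ S, 0 ≤ w x)
    (hw1 : ∑ x ∈ S, w x = 1) :
    ∑ x ∈ S, w x * c x ≤ Real.log (∑ x ∈ S, w x * Real.exp (c x)) := by
  set μ := ∑ x ∈ S, w x * c x with hμ
  have key : Real.exp μ ≤ ∑ x ∈ S, w x * Real.exp (c x) := by
    have h1 : ∀ x ∈ S, w x * (Real.exp μ * (1 + (c x - μ))) ≤ w x * Real.exp (c x) := by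
      intro x hx
      apply mul_le_mul_of_nonneg_left _ (hw x hx)
      have := Real.add_one_le_exp (c x - μ)
      calc Real.exp μ * (1 + (c x - μ)) ≤ Real.exp μ * Real.exp (c x - μ) := by
            apply mul_le_mul_of_nonneg_left _ (Real.exp_pos μ).le
            linarith
        _ = Real.exp (c x) := by rw [← Real.exp_add]; ring_nf
    calc Real.exp μ = ∑ x ∈ S, w x * (Real.exp μ * (1 + (c x - μ))) := by
          have e1 : ∑ x ∈ S, w x * (Real.exp μ * (1 + (c x - μ)))
              = Real.exp μ * ∑ x ∈ S, (w x + (w x * c x - μ * w x)) := by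
            rw [Finset.mul_sum]; exact Finset.sum_congr rfl fun x _ => by ring
          rw [e1, Finset.sum_add_distrib, Finset.sum_sub_distrib, ← Finset.mul_sum, hw1, ← hμ]
          ring
      _ ≤ ∑ x ∈ S, w x * Real.exp (c x) := Finset.sum_le_sum h1
  have hpos : 0 < ∑ x ∈ S, w x * Real.exp (c x) := lt_of_lt_of_le (Real.exp_pos μ) key
  rw [Real.le_log_iff_exp_le hpos]
  exact key

lemma psi_sub_ge (S B : Finset (Finset V)) (hS : S.Nonempty) (θ θs : Finset V → ℝ) :
    ∑ x ∈ S, gibbs S B θs x * (∑ s ∈ B, zeta s x * θ s - ∑ s ∈ B, zeta s x * θs s)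
      ≤ psi S B θ - psi S B θs := by
  have hrw : psi S B θ - psi S B θs
      = Real.log (∑ x ∈ S, gibbs S B θs x *
          Real.exp (∑ s ∈ B, zeta s x * θ s - ∑ s ∈ B, zeta s x * θs s)) := by
    have e1 : ∀ x ∈ S, gibbs S B θs x *
        Real.exp (∑ s ∈ B, zeta s x * θ s - ∑ s ∈ B, zeta s x * θs s)
        = Real.exp (∑ s ∈ B, zeta s x * θ s) * Real.exp (-(psi S B θs)) := by
      intro x _
      rw [gibbs, ← Real.exp_add, ← Real.exp_add]
      ring_nf
    rw [Finset.sum_congr rfl e1, ← Finset.sum_mul,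
      Real.log_mul (sumexp_pos S B hS θ).ne' (Real.exp_ne_zero _), Real.log_exp, psi]
    ring
  rw [hrw]
  exact jensen S _ _ (fun x _ => gibbs_nonneg S B θs x) (gibbs_sum_one S B hS θs)

lemma multiset_sum_finset_sum {α β : Type*} (D : Multiset α) (B : Finset β) (g : β → α → ℝ) :
    (D.map (fun x => ∑ s ∈ B, g s x)).sum = ∑ s ∈ B, (D.map (g s)).sum := by
  induction D using Multiset.induction with
  | empty => simp
  | cons a t ih => simp [ih, Finset.sum_add_distrib]

lemma multiset_sum_map_const {α : Type*} (D : Multiset α) (c : ℝ) :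
    (D.map (fun _ => c)).sum = D.card * c := by
  simp [Multiset.map_const]

end Aux

/-- Characterization of MLE in TBMs: θ* maximizes the log-likelihood
L_D(θ) = Σ_{x ∈ D} (Σ_{s ∈ B} ζ(s,x) θ(s) − ψ(θ)) over all θ iff
η(y;θ*) = η̂(y) for every y ∈ B, where η̂(y) = (1/N) Σ_{x ∈ D} ζ(y,x). -/
theorem mle_iff_expectation_matching {V : Type*} [Fintype V] [DecidableEq V]
    (S B : Finset (Finset V)) (hS : S.Nonempty)
    (D : Multiset (Finset V)) (hD : ∀ x ∈ D, x ∈ S) (hDne : D ≠ 0)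
    (θs : Finset V → ℝ) :
    (∀ θ : Finset V → ℝ,
        (D.map (fun x => ∑ s ∈ B, zeta s x * θ s - psi S B θ)).sum ≤
        (D.map (fun x => ∑ s ∈ B, zeta s x * θs s - psi S B θs)).sum) ↔
      (∀ y ∈ B, eta S B θs y = (1 / (D.card : ℝ)) * (D.map (fun x => zeta y x)).sum) := by
  have hNpos : (0:ℝ) < (D.card : ℝ) := by
    exact_mod_cast Multiset.card_pos.mpr hDne
  constructor
  · -- maximizer ⇒ moment matching
    intro hmax y hy
    set a : Finset V → ℝ := fun x => ∑ s ∈ B, zeta s x * θs s with ha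
    set b : Finset V → ℝ := fun x => zeta y x with hb
    set θt : ℝ → Finset V → ℝ := fun t s => θs s + (if s = y then t else 0) with hθt
    have hlin : ∀ (t : ℝ) (x : Finset V), ∑ s ∈ B, zeta s x * θt t s = a x + t * b x := by
      intro t x
      simp only [hθt, ha, hb]
      rw [show (fun s => zeta s x * (θs s + if s = y then t else 0))
          = (fun s => zeta s x * θs s + (if s = y then zeta s x * t else 0)) from ?_]
      · rw [Finset.sum_add_distrib, Finset.sum_ite_eq' B y (fun s => zeta s x * t), if_pos hy]
        ring
      · funext s; split_ifs with h <;> ring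
    set h : ℝ → ℝ := fun t => ∑ x ∈ S, Real.exp (a x + t * b x) with hh
    have hpos : ∀ t, 0 < h t := fun t => Finset.sum_pos (fun _ _ => Real.exp_pos _) hS
    set A : ℝ := (D.map a).sum with hA
    set Cy : ℝ := (D.map b).sum with hCy
    set g : ℝ → ℝ := fun t => A + t * Cy - (D.card : ℝ) * Real.log (h t) with hg
    -- g t equals the likelihood at θt t
    have hgt : ∀ t, (D.map (fun x => ∑ s ∈ B, zeta s x * θt t s - psi S B (θt t))).sum = g t := by
      intro t
      have hpsit : psi S B (θt t) = Real.log (h t) := by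
        rw [psi, hh]
        congr 1
        exact Finset.sum_congr rfl fun x _ => by rw [hlin t x]
      calc (D.map (fun x => ∑ s ∈ B, zeta s x * θt t s - psi S B (θt t))).sum
          = (D.map (fun x => (a x + t * b x) - Real.log (h t))).sum := by
            congr 1
            exact Multiset.map_congr rfl fun x _ => by rw [hlin t x, hpsit]
        _ = (D.map (fun x => a x + t * b x)).sum - (D.map (fun _ => Real.log (h t))).sum := by
            rw [Multiset.sum_map_sub]
        _ = g t := by
            rw [Multiset.sum_map_add, Multiset.sum_map_mul_left, multiset_sum_map_const, hg]
    have hθt0 : θt 0 = θs := by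
      funext s; simp [hθt]
    have hmaxg : ∀ t, g t ≤ g 0 := by
      intro t
      rw [← hgt t, ← hgt 0, hθt0]
      exact hmax (θt t)
    -- derivative of h
    have hderivh : HasDerivAt h (∑ x ∈ S, Real.exp (a x) * b x) 0 := by
      apply HasDerivAt.fun_sum
      intro x _
      simpa using (((hasDerivAt_id (0:ℝ)).mul_const (b x)).const_add (a x)).exp
    have hderivg : HasDerivAt g
        (Cy - (D.card : ℝ) * ((∑ x ∈ S, Real.exp (a x) * b x) / h 0)) 0 := by
      have h1 : HasDerivAt (fun t => A + t * Cy) Cy 0 := by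
        simpa using ((hasDerivAt_id (0:ℝ)).mul_const Cy).const_add A
      have h2 : HasDerivAt (fun t => Real.log (h t))
          ((∑ x ∈ S, Real.exp (a x) * b x) / h 0) 0 :=
        hderivh.log (hpos 0).ne'
      exact h1.sub (h2.const_mul _)
    have hzero := (IsLocalMax.hasDerivAt_eq_zero
      (Filter.Eventually.of_forall hmaxg) hderivg)
    -- identify eta with the quotient
    have heta : eta S B θs y = (∑ x ∈ S, Real.exp (a x) * b x) / h 0 := by
      have h0eq : h 0 = ∑ z ∈ S, Real.exp (∑ s ∈ B, zeta s z * θs s) := by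
        simp [hh, ha]
      rw [eta, Finset.sum_div]
      apply Finset.sum_congr rfl
      intro x hx
      rw [gibbs_eq S B hS θs x, ← h0eq, hb, ha]
      ring
    rw [heta]
    have hne : h 0 ≠ 0 := (hpos 0).ne'
    have hN : (D.card : ℝ) ≠ 0 := hNpos.ne'
    have hgoal : (1 / (D.card : ℝ)) * (D.map (fun x => zeta y x)).sum = (1 / (D.card : ℝ)) * Cy := by
      rw [hCy, hb]
    rw [hgoal]
    field_simp at hzero ⊢
    linarith [hzero]
  · -- moment matching ⇒ maximizer
    intro hη θ
    have key := psi_sub_ge S B hS θ θs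
    rw [Multiset.sum_map_sub, Multiset.sum_map_sub, multiset_sum_map_const, multiset_sum_map_const]
    have hAθ : ∀ θ' : Finset V → ℝ, (D.map (fun x => ∑ s ∈ B, zeta s x * θ' s)).sum
        = ∑ s ∈ B, (D.map (fun x => zeta s x)).sum * θ' s := by
      intro θ'
      rw [multiset_sum_finset_sum D B (fun s x => zeta s x * θ' s)]
      exact Finset.sum_congr rfl fun s _ => by rw [Multiset.sum_map_mul_right]
    have hCs : ∀ s ∈ B, (D.map (fun x => zeta s x)).sum = (D.card : ℝ) * eta S B θs s := by
      intro s hs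
      rw [hη s hs]
      field_simp
    have hdiff : (D.map (fun x => ∑ s ∈ B, zeta s x * θ s)).sum
        - (D.map (fun x => ∑ s ∈ B, zeta s x * θs s)).sum
        = (D.card : ℝ) * ∑ x ∈ S, gibbs S B θs x *
            (∑ s ∈ B, zeta s x * θ s - ∑ s ∈ B, zeta s x * θs s) := by
      rw [hAθ θ, hAθ θs, ← Finset.sum_sub_distrib]
      have e1 : ∀ s ∈ B, (D.map (fun x => zeta s x)).sum * θ s
          - (D.map (fun x => zeta s x)).sum * θs s
          = (D.card : ℝ) * ∑ x ∈ S, gibbs S B θs x * (zeta s x * θ s - zeta s x * θs s) := by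
        intro s hs
        have e2 : ∑ x ∈ S, gibbs S B θs x * (zeta s x * θ s - zeta s x * θs s)
            = (∑ x ∈ S, zeta s x * gibbs S B θs x) * θ s
              - (∑ x ∈ S, zeta s x * gibbs S B θs x) * θs s := by
          rw [Finset.sum_mul, Finset.sum_mul, ← Finset.sum_sub_distrib]
          exact Finset.sum_congr rfl fun x _ => by ring
        rw [hCs s hs, eta, e2]
        ring
      rw [Finset.sum_congr rfl e1, ← Finset.mul_sum]
      congr 1
      rw [Finset.sum_comm]
      apply Finset.sum_congr rfl
      intro x _
      rw [← Finset.sum_sub_distrib, Finset.mul_sum]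
    have hfin : (D.card : ℝ) * ∑ x ∈ S, gibbs S B θs x *
          (∑ s ∈ B, zeta s x * θ s - ∑ s ∈ B, zeta s x * θs s)
        ≤ (D.card : ℝ) * (psi S B θ - psi S B θs) :=
      mul_le_mul_of_nonneg_left key hNpos.le
    linarith [hdiff, hfin]
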